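/- Let Ĉ be a cyclic code of length n = p^k over R = F[u]/⟨u⁴⟩ with third torsional degree 𝔱, let 0 ≤ r_3 < n, and let C be the ideal of S generated by Ĉ together with g_3(x) = u³(x−1)^{r_3}. Then the third torsional degree t_3 of C satisfies: t_3 = 𝔱 if r_3 ≥ 𝔱, and t_3 = r_3 if r_3 < 𝔱; that is, t_3 = min{𝔱, r_3}. -/

import Mathlib

open Polynomial
open scoped Classical

noncomputable section

/-- The ring `R = F[u]/⟨u⁴⟩`. -/
abbrev Rq (F : Type) [Field F] : Type :=
  Polynomial F ⧸ Ideal.span ({X ^ 4} : Set (Polynomial F))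

instance instCommRingRq (F : Type) [Field F] : CommRing (Rq F) :=
  Ideal.Quotient.commRing _

/-- The ring `S = R[x]/⟨xⁿ − 1⟩`. -/
abbrev Sq (F : Type) [Field F] (n : ℕ) : Type :=
  Polynomial (Rq F) ⧸ Ideal.span ({X ^ n - 1} : Set (Polynomial (Rq F)))

/-- The ring `Q = F[x]/⟨xⁿ − 1⟩`. -/
abbrev Qq (F : Type) [Field F] (n : ℕ) : Type :=
  Polynomial F ⧸ Ideal.span ({X ^ n - 1} : Set (Polynomial F))

/-- The element `u` of `R`. -/
def uu (F : Type) [Field F] : Rq F := Ideal.Quotient.mk _ X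

/-- The element `u` of `S`. -/
def uS (F : Type) [Field F] (n : ℕ) : Sq F n := Ideal.Quotient.mk _ (C (uu F))

/-- The element `x` of `S`. -/
def xS (F : Type) [Field F] (n : ℕ) : Sq F n := Ideal.Quotient.mk _ X

/-- The element `x` of `Q`. -/
def xQ (F : Type) [Field F] (n : ℕ) : Qq F n := Ideal.Quotient.mk _ X

/-- Reduction `R → F` modulo `u`. -/
def resHom (F : Type) [Field F] : Rq F →+* F :=
  Ideal.Quotient.lift _ (evalRingHom 0) (by
    intro a ha
    rw [Ideal.mem_span_singleton] at ha
    obtain ⟨c, rfl⟩ := ha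
    simp)

/-- Reduction `μ : S → Q` modulo `u`. -/
def muHom (F : Type) [Field F] (n : ℕ) : Sq F n →+* Qq F n :=
  Ideal.Quotient.lift _ ((Ideal.Quotient.mk _).comp (mapRingHom (resHom F))) (by
    intro a ha
    rw [Ideal.mem_span_singleton] at ha
    obtain ⟨c, rfl⟩ := ha
    rw [RingHom.comp_apply, map_mul, Ideal.Quotient.eq_zero_iff_mem]
    apply Ideal.mul_mem_right
    have h : (mapRingHom (resHom F)) (X ^ n - 1 : Polynomial (Rq F))
        = (X ^ n - 1 : Polynomial F) := by simp
    rw [h]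
    exact Ideal.subset_span rfl)

/-- The natural lift `Q → S` (sending `a ∈ F` to itself and `x ↦ x`). -/
def liftQS (F : Type) [Field F] (n : ℕ) : Qq F n →+* Sq F n :=
  Ideal.Quotient.lift _
    ((Ideal.Quotient.mk _).comp
      (mapRingHom ((Ideal.Quotient.mk _).comp (C : F →+* Polynomial F)))) (by
    intro a ha
    rw [Ideal.mem_span_singleton] at ha
    obtain ⟨c, rfl⟩ := ha
    rw [RingHom.comp_apply, map_mul, Ideal.Quotient.eq_zero_iff_mem]
    apply Ideal.mul_mem_right
    have h : (mapRingHom ((Ideal.Quotient.mk (Ideal.span ({X ^ 4} : Set (Polynomial F)))).comp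
        (C : F →+* Polynomial F))) (X ^ n - 1 : Polynomial F)
        = (X ^ n - 1 : Polynomial (Rq F)) := by simp
    rw [h]
    exact Ideal.subset_span rfl)

/-- The `i`-th torsion code `Tor_i(C) = {μ(g) : uⁱ·g ∈ C}`, as a subset of `Q`. -/
def TorSet (F : Type) [Field F] (n : ℕ) (i : ℕ) (Cc : Ideal (Sq F n)) : Set (Qq F n) :=
  { a | ∃ g : Sq F n, (uS F n) ^ i * g ∈ Cc ∧ muHom F n g = a }

/-- The code `C` has `i`-th torsional degree `t`, i.e. `Tor_i(C) = ⟨(x−1)^t⟩` with `0 ≤ t ≤ n`. -/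
def HasTorDeg (F : Type) [Field F] (n : ℕ) (i : ℕ) (Cc : Ideal (Sq F n)) (t : ℕ) : Prop :=
  t ≤ n ∧ TorSet F n i Cc = ↑(Ideal.span {(xQ F n - 1) ^ t})

/-- An element of `S` that is the lift of a unit of `Q = F[x]/⟨xⁿ−1⟩`. -/
def IsUnitLift (F : Type) [Field F] (n : ℕ) (a : Sq F n) : Prop :=
  ∃ q : Qq F n, IsUnit q ∧ a = liftQS F n q

/-- An element of `S` that is zero or the lift of a unit of `Q = F[x]/⟨xⁿ−1⟩`. -/
def UnitOrZeroLift (F : Type) [Field F] (n : ℕ) (a : Sq F n) : Prop :=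
  a = 0 ∨ IsUnitLift F n a

lemma mu_lift (F : Type) [Field F] (n : ℕ) (q : Qq F n) :
    muHom F n (liftQS F n q) = q := by
  obtain ⟨f, rfl⟩ := Ideal.Quotient.mk_surjective q
  simp only [liftQS, muHom, Ideal.Quotient.lift_mk, RingHom.comp_apply, coe_mapRingHom,
    Polynomial.map_map]
  congr 1
  have : (resHom F).comp ((Ideal.Quotient.mk
      (Ideal.span ({X ^ 4} : Set (Polynomial F)))).comp (C : F →+* Polynomial F))
      = RingHom.id F := by
    ext a
    simp [resHom]
  rw [this, Polynomial.map_id]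

lemma mu_x (F : Type) [Field F] (n : ℕ) : muHom F n (xS F n) = xQ F n := by
  simp [muHom, xS, xQ, Ideal.Quotient.lift_mk]

set_option synthInstance.maxHeartbeats 1000000 in
set_option maxHeartbeats 1000000 in
/-- adjoining `u³(x−1)^{r₃}` to a code with third torsional degree `𝔱`
produces a code with third torsional degree `𝔱` if `r₃ ≥ 𝔱`, and `r₃` if `r₃ < 𝔱`. -/
theorem stmt_15 (p m k : ℕ) (hp : Nat.Prime p) (hm : 1 ≤ m) (hk : 1 ≤ k)
    (F : Type) [Field F] [Fintype F] (hF : Fintype.card F = p ^ m)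
    (Chat : Ideal (Sq F (p ^ k))) (t : ℕ) (hChat : HasTorDeg F (p ^ k) 3 Chat t)
    (r₃ : ℕ) (hr₃ : r₃ < p ^ k)
    (C : Ideal (Sq F (p ^ k)))
    (hC : C = Chat ⊔ Ideal.span { uS F (p ^ k) ^ 3 * (xS F (p ^ k) - 1) ^ r₃ }) :
    (t ≤ r₃ → HasTorDeg F (p ^ k) 3 C t) ∧
    (r₃ < t → HasTorDeg F (p ^ k) 3 C r₃) := by
  obtain ⟨ht, hTor⟩ := hChat
  -- forward inclusion into the sup of the two spans
  have hforward : ∀ a ∈ TorSet F (p ^ k) 3 C,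
      a ∈ (Ideal.span {(xQ F (p ^ k) - 1) ^ t} ⊔ Ideal.span {(xQ F (p ^ k) - 1) ^ r₃} : Ideal (Qq F (p ^ k))) := by
    rintro a ⟨g, hg, rfl⟩
    rw [hC, Submodule.mem_sup] at hg
    obtain ⟨c, hc, b, hb, hcb⟩ := hg
    obtain ⟨s, rfl⟩ := Ideal.mem_span_singleton'.mp hb
    have hc' : uS F (p ^ k) ^ 3 * (g - (xS F (p ^ k) - 1) ^ r₃ * s) ∈ Chat := by
      have : uS F (p ^ k) ^ 3 * (g - (xS F (p ^ k) - 1) ^ r₃ * s) = c := by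
        linear_combination -hcb
      rw [this]; exact hc
    have hmem : muHom F (p ^ k) (g - (xS F (p ^ k) - 1) ^ r₃ * s) ∈ TorSet F (p ^ k) 3 Chat :=
      ⟨_, hc', rfl⟩
    rw [hTor] at hmem
    have hgeq : muHom F (p ^ k) g = muHom F (p ^ k) (g - (xS F (p ^ k) - 1) ^ r₃ * s)
        + (xQ F (p ^ k) - 1) ^ r₃ * muHom F (p ^ k) s := by
      rw [map_sub, map_mul, map_pow, map_sub, map_one, mu_x]
      ring
    rw [hgeq]
    exact Submodule.add_mem_sup hmem
      (Ideal.mul_mem_right _ _ (Ideal.subset_span rfl))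
  -- backward inclusion from the span of (x-1)^t
  have hback1 : (↑(Ideal.span {(xQ F (p ^ k) - 1) ^ t}) : Set (Qq F (p ^ k))) ⊆ TorSet F (p ^ k) 3 C := by
    intro a ha
    rw [← hTor] at ha
    obtain ⟨g, hg, rfl⟩ := ha
    exact ⟨g, by rw [hC]; exact Ideal.mem_sup_left hg, rfl⟩
  -- backward inclusion from the span of (x-1)^{r₃}
  have hback2 : (↑(Ideal.span {(xQ F (p ^ k) - 1) ^ r₃}) : Set (Qq F (p ^ k))) ⊆ TorSet F (p ^ k) 3 C := by
    intro a ha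
    rw [SetLike.mem_coe, Ideal.mem_span_singleton] at ha
    obtain ⟨q, rfl⟩ := ha
    refine ⟨(xS F (p ^ k) - 1) ^ r₃ * liftQS F (p ^ k) q, ?_, ?_⟩
    · rw [hC]
      apply Ideal.mem_sup_right
      rw [← mul_assoc]
      exact Ideal.mem_span_singleton'.mpr ⟨liftQS F (p ^ k) q, by ring⟩
    · rw [map_mul, map_pow, map_sub, map_one, mu_x, mu_lift]
  constructor
  · intro htr
    refine ⟨ht, Set.Subset.antisymm ?_ hback1⟩
    intro a ha
    have := hforward a ha
    have hle : (Ideal.span {(xQ F (p ^ k) - 1) ^ r₃} : Ideal (Qq F (p ^ k)))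
        ≤ Ideal.span {(xQ F (p ^ k) - 1) ^ t} := by
      rw [Ideal.span_singleton_le_span_singleton]
      exact pow_dvd_pow _ htr
    exact sup_le le_rfl hle this
  · intro hrt
    refine ⟨le_of_lt hr₃, Set.Subset.antisymm ?_ hback2⟩
    intro a ha
    have := hforward a ha
    have hle : (Ideal.span {(xQ F (p ^ k) - 1) ^ t} : Ideal (Qq F (p ^ k)))
        ≤ Ideal.span {(xQ F (p ^ k) - 1) ^ r₃} := by
      rw [Ideal.span_singleton_le_span_singleton]
      exact pow_dvd_pow _ (le_of_lt hrt)
    exact sup_le hle le_rfl this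

end
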